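/- Let f : ℝⁿ → ℝ ∪ {∞} be proper, closed, and convex, and η > 0. Then the Moreau envelope f^η is differentiable with gradient ∇f^η(x) = (1/η)(x − prox_{ηf}(x)), and ∇f^η is (1/η)-Lipschitz continuous. -/

import Mathlib

open scoped RealInnerProductSpace

set_option maxHeartbeats 2000000 in
/-- The Moreau envelope of a proper closed convex function is differentiable with
gradient `(1/η)(x - prox_{ηf}(x))`, and the gradient is `(1/η)`-Lipschitz. -/
theorem stmt4 {n : ℕ} (f : EuclideanSpace ℝ (Fin n) → ℝ) (η : ℝ) (hη : 0 < η)
    (hconv : ConvexOn ℝ Set.univ f) (hlsc : LowerSemicontinuous f)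
    (prox : EuclideanSpace ℝ (Fin n) → EuclideanSpace ℝ (Fin n))
    (hprox : ∀ x, IsMinOn (fun y => f y + ‖y - x‖ ^ 2 / (2 * η)) Set.univ (prox x)) :
    (∀ x, HasGradientAt
        (fun z => ⨅ y : EuclideanSpace ℝ (Fin n), (f y + ‖y - z‖ ^ 2 / (2 * η)))
        ((1 / η) • (x - prox x)) x) ∧
    LipschitzWith (Real.toNNReal (1 / η)) (fun x => (1 / η) • (x - prox x)) := by
  have h2η : (0:ℝ) < 2 * η := by linarith
  -- minimality in usable form
  have hmin : ∀ x y, f (prox x) + ‖prox x - x‖ ^ 2 / (2 * η) ≤ f y + ‖y - x‖ ^ 2 / (2 * η) :=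
    fun x y => (isMinOn_iff.mp (hprox x)) y (Set.mem_univ y)
  -- subgradient inequality (scaled by η)
  have hsub : ∀ x z, η * f (prox x) + ⟪x - prox x, z - prox x⟫ ≤ η * f z := by
    intro x z
    set p := prox x with hp
    set a : ℝ := ⟪p - x, z - p⟫ with ha
    set b : ℝ := ‖z - p‖ ^ 2 with hb
    have hb0 : 0 ≤ b := by positivity
    have key : ∀ t : ℝ, 0 < t → t ≤ 1 →
        t * (2 * η * f p) ≤ t * (2 * η * f z + 2 * a + t * b) := by
      intro t ht ht1
      have hmin' := hmin x (p + t • (z - p))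
      have hcv : f (p + t • (z - p)) ≤ (1 - t) * f p + t * f z := by
        have h := hconv.2 (Set.mem_univ p) (Set.mem_univ z) (by linarith) ht.le
          (by ring : (1 - t) + t = 1)
        have he : (1 - t) • p + t • z = p + t • (z - p) := by module
        rw [he] at h
        exact h
      have hnorm : ‖p + t • (z - p) - x‖ ^ 2 = ‖p - x‖ ^ 2 + 2 * t * a + t ^ 2 * b := by
        have h1 : p + t • (z - p) - x = (p - x) + t • (z - p) := by abel
        rw [h1, norm_add_sq_real, real_inner_smul_right, norm_smul, Real.norm_eq_abs,
          abs_of_pos ht, mul_pow, ha, hb]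
        ring
      rw [hnorm] at hmin'
      have hmin'' : 2 * η * (f p + ‖p - x‖ ^ 2 / (2 * η)) ≤
          2 * η * (f (p + t • (z - p)) + (‖p - x‖ ^ 2 + 2 * t * a + t ^ 2 * b) / (2 * η)) :=
        mul_le_mul_of_nonneg_left hmin' h2η.le
      rw [mul_add, mul_div_cancel₀ _ h2η.ne', mul_add, mul_div_cancel₀ _ h2η.ne'] at hmin''
      nlinarith [mul_le_mul_of_nonneg_left hcv h2η.le]
    have hgoal : ∀ ε : ℝ, 0 < ε → η * f (prox x) + ⟪x - p, z - p⟫ ≤ η * f z + ε := by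
      intro ε hε
      set t : ℝ := min 1 (2 * ε / (b + 1)) with htdef
      have hb1 : (0:ℝ) < b + 1 := by linarith
      have ht : 0 < t := lt_min one_pos (by positivity)
      have ht1 : t ≤ 1 := min_le_left _ _
      have hkey := key t ht ht1
      have h2 : 2 * η * f p ≤ 2 * η * f z + 2 * a + t * b := by
        have := (mul_le_mul_iff_right₀ ht).mp hkey
        linarith
      have htb : t * b ≤ 2 * ε := by
        have h3 : t ≤ 2 * ε / (b + 1) := min_le_right _ _
        have h4 : t * (b + 1) ≤ 2 * ε := (le_div_iff₀ hb1).mp h3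
        nlinarith
      have hia : ⟪x - p, z - p⟫ = -a := by
        rw [ha, ← neg_sub p x, inner_neg_left]
      rw [hia, ← hp]
      linarith
    exact le_of_forall_pos_le_add hgoal
  -- firm nonexpansiveness
  have hfirm : ∀ x y, ‖prox x - prox y‖ ^ 2 ≤ ⟪x - y, prox x - prox y⟫ := by
    intro x y
    have A1 := hsub x (prox y)
    have A2 := hsub y (prox x)
    have hadd : ⟪x - prox x, prox y - prox x⟫ + ⟪y - prox y, prox x - prox y⟫ ≤ 0 := by
      linarith
    have e1 : ⟪x - prox x, prox y - prox x⟫ = -⟪x - prox x, prox x - prox y⟫ := by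
      rw [← neg_sub (prox x) (prox y), inner_neg_right]
    have e2 : ⟪x - prox x, prox x - prox y⟫
        = ⟪x - y, prox x - prox y⟫ - ⟪prox x - prox y, prox x - prox y⟫
          + ⟪y - prox y, prox x - prox y⟫ := by
      simp only [inner_sub_left]
      ring
    have e3 : ⟪prox x - prox y, prox x - prox y⟫ = ‖prox x - prox y‖ ^ 2 := by
      rw [real_inner_self_eq_norm_sq]
    rw [e1, e2, e3] at hadd
    linarith
  -- nonexpansiveness of x ↦ x - prox x
  have hne : ∀ x y, ‖(x - prox x) - (y - prox y)‖ ≤ ‖x - y‖ := by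
    intro x y
    have h1 : (x - prox x) - (y - prox y) = (x - y) - (prox x - prox y) := by abel
    have h2 : ‖(x - y) - (prox x - prox y)‖ ^ 2
        = ‖x - y‖ ^ 2 - 2 * ⟪x - y, prox x - prox y⟫ + ‖prox x - prox y‖ ^ 2 := by
      rw [norm_sub_sq_real]
    have h3 := hfirm x y
    have h4 : ‖(x - y) - (prox x - prox y)‖ ^ 2 ≤ ‖x - y‖ ^ 2 := by nlinarith
    rw [h1]
    nlinarith [norm_nonneg ((x - y) - (prox x - prox y)), norm_nonneg (x - y)]
  -- envelope value and bounds
  have hbdd : ∀ x : EuclideanSpace ℝ (Fin n),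
      BddBelow (Set.range fun y => f y + ‖y - x‖ ^ 2 / (2 * η)) := by
    intro x
    exact ⟨f (prox x) + ‖prox x - x‖ ^ 2 / (2 * η), by rintro v ⟨y, rfl⟩; exact hmin x y⟩
  have henv : ∀ x : EuclideanSpace ℝ (Fin n),
      (⨅ y : EuclideanSpace ℝ (Fin n), (f y + ‖y - x‖ ^ 2 / (2 * η)))
        = f (prox x) + ‖prox x - x‖ ^ 2 / (2 * η) := by
    intro x
    exact le_antisymm (ciInf_le (hbdd x) (prox x)) (le_ciInf (hmin x))
  set Env : EuclideanSpace ℝ (Fin n) → ℝ :=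
    fun z => ⨅ y : EuclideanSpace ℝ (Fin n), (f y + ‖y - z‖ ^ 2 / (2 * η)) with hEnv
  have hub : ∀ x z, Env z - Env x ≤ ⟪x - prox x, z - x⟫ / η + ‖z - x‖ ^ 2 / (2 * η) := by
    intro x z
    have h1 : Env z ≤ f (prox x) + ‖prox x - z‖ ^ 2 / (2 * η) := ciInf_le (hbdd z) (prox x)
    have h2 : Env x = f (prox x) + ‖prox x - x‖ ^ 2 / (2 * η) := henv x
    have h3 : ‖prox x - z‖ ^ 2 = ‖prox x - x‖ ^ 2 + 2 * ⟪prox x - x, x - z⟫ + ‖x - z‖ ^ 2 := by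
      have he : prox x - z = (prox x - x) + (x - z) := by abel
      rw [he, norm_add_sq_real]
    have h4 : ⟪prox x - x, x - z⟫ = ⟪x - prox x, z - x⟫ := by
      rw [← neg_sub x (prox x), ← neg_sub z x, inner_neg_neg]
    have h5 : ‖x - z‖ = ‖z - x‖ := norm_sub_rev x z
    rw [h3, h4, h5] at h1
    rw [h2]
    have : (‖prox x - x‖ ^ 2 + 2 * ⟪x - prox x, z - x⟫ + ‖z - x‖ ^ 2) / (2 * η)
        = ‖prox x - x‖ ^ 2 / (2 * η) + ⟪x - prox x, z - x⟫ / η + ‖z - x‖ ^ 2 / (2 * η) := by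
      field_simp
    rw [this] at h1
    linarith
  refine ⟨?_, ?_⟩
  · intro x
    rw [hasGradientAt_iff_isLittleO]
    rw [Asymptotics.isLittleO_iff]
    intro c hc
    have hδ : (0:ℝ) < 2 * η * c / 3 := by positivity
    filter_upwards [Metric.ball_mem_nhds x hδ] with z hz
    rw [Metric.mem_ball, dist_eq_norm] at hz
    -- the gradient pairing
    have hgp : ⟪(1 / η) • (x - prox x), z - x⟫ = ⟪x - prox x, z - x⟫ / η := by
      rw [real_inner_smul_left]; ring
    have hup := hub x z
    have hlo := hub z x
    -- lower bound manipulation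
    have hCS : |⟪(z - prox z) - (x - prox x), z - x⟫| ≤ ‖z - x‖ * ‖z - x‖ := by
      calc |⟪(z - prox z) - (x - prox x), z - x⟫|
          ≤ ‖(z - prox z) - (x - prox x)‖ * ‖z - x‖ := abs_real_inner_le_norm _ _
        _ ≤ ‖z - x‖ * ‖z - x‖ :=
            mul_le_mul_of_nonneg_right (hne z x) (norm_nonneg _)
    have hsplit : ⟪z - prox z, x - z⟫
        = -⟪x - prox x, z - x⟫ - ⟪(z - prox z) - (x - prox x), z - x⟫ := by
      rw [show x - z = -(z - x) from (neg_sub z x).symm, inner_neg_right]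
      simp only [inner_sub_left]
      ring
    rw [hsplit] at hlo
    have hnrev : ‖x - z‖ = ‖z - x‖ := norm_sub_rev x z
    rw [hnrev] at hlo
    -- combine
    have habs : |Env z - Env x - ⟪x - prox x, z - x⟫ / η|
        ≤ 3 / (2 * η) * (‖z - x‖ * ‖z - x‖) := by
      rw [abs_le]
      constructor
      · have h6 : (-⟪x - prox x, z - x⟫ - ⟪(z - prox z) - (x - prox x), z - x⟫) / η
            = -(⟪x - prox x, z - x⟫ / η) - ⟪(z - prox z) - (x - prox x), z - x⟫ / η := by
          ring
        rw [h6] at hlo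
        have h7 : -(‖z - x‖ * ‖z - x‖) / η ≤ ⟪(z - prox z) - (x - prox x), z - x⟫ / η :=
          div_le_div_of_nonneg_right (abs_le.mp hCS).1 hη.le
        have h7' : -(‖z - x‖ * ‖z - x‖) / η = -(‖z - x‖ * ‖z - x‖ / η) := neg_div _ _
        have h8 : ‖z - x‖ ^ 2 / (2 * η) = ‖z - x‖ * ‖z - x‖ / (2 * η) := by ring_nf
        have h9 : ‖z - x‖ * ‖z - x‖ / η + ‖z - x‖ * ‖z - x‖ / (2 * η)
            = 3 / (2 * η) * (‖z - x‖ * ‖z - x‖) := by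
          field_simp
          ring
        rw [h8] at hlo
        rw [h7'] at h7
        linarith
      · have h8 : ‖z - x‖ ^ 2 / (2 * η) = ‖z - x‖ * ‖z - x‖ / (2 * η) := by ring_nf
        rw [h8] at hup
        have h9 : ‖z - x‖ * ‖z - x‖ / η + ‖z - x‖ * ‖z - x‖ / (2 * η)
            = 3 / (2 * η) * (‖z - x‖ * ‖z - x‖) := by
          field_simp
          ring
        have h10 : (0:ℝ) ≤ ‖z - x‖ * ‖z - x‖ / η := by positivity
        linarith
    have hr0 : (0:ℝ) ≤ ‖z - x‖ := norm_nonneg _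
    have h3r : 3 * ‖z - x‖ ≤ 2 * η * c := by linarith
    have hfin : 3 / (2 * η) * (‖z - x‖ * ‖z - x‖) ≤ c * ‖z - x‖ := by
      rw [div_mul_eq_mul_div, div_le_iff₀ h2η]
      nlinarith [mul_le_mul_of_nonneg_right h3r hr0]
    rw [Real.norm_eq_abs, hgp]
    exact habs.trans hfin
  · apply LipschitzWith.of_dist_le_mul
    intro x y
    rw [dist_eq_norm, dist_eq_norm, ← smul_sub, norm_smul, Real.norm_eq_abs,
      abs_of_pos (by positivity : (0:ℝ) < 1 / η),
      Real.coe_toNNReal _ (by positivity : (0:ℝ) ≤ 1 / η)]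
    exact mul_le_mul_of_nonneg_left (hne x y) (by positivity)
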